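/- If f is an almost homomorphism from ℤ to ℤ, then there exists a constant C such that |f(nm) − n·f(m)| ≤ C·|n| for all integers n, m with n ≠ 0. -/

import Mathlib

/-- `f : ℤ → ℤ` is an almost homomorphism: `f (p+q) - f p - f q` has bounded range. -/
def AlmostHom (f : ℤ → ℤ) : Prop := ∃ C : ℤ, ∀ p q : ℤ, |f (p + q) - f p - f q| < C

/-- `f : ℤ → ℤ` has bounded range. -/
def Bdd (f : ℤ → ℤ) : Prop := ∃ C : ℤ, ∀ p : ℤ, |f p| < C

lemma almostHom_nat_growth (f : ℤ → ℤ) (C : ℤ)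
    (h : ∀ p q : ℤ, |f (p + q) - f p - f q| ≤ C) :
    ∀ (k : ℕ) (m : ℤ), |f ((k : ℤ) * m) - (k : ℤ) * f m| ≤ C * k + |f 0| := by
  intro k
  induction k with
  | zero =>
    intro m
    simp
  | succ k ih =>
    intro m
    have h1 := h ((k : ℤ) * m) m
    have h2 := ih m
    have key : f (((k : ℕ) + 1 : ℤ) * m) - ((k : ℕ) + 1 : ℤ) * f m
        = (f ((k : ℤ) * m + m) - f ((k : ℤ) * m) - f m) + (f ((k : ℤ) * m) - (k : ℤ) * f m) := by
      push_cast
      ring_nf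
    push_cast
    push_cast at key h2 ⊢
    rw [key]
    calc |_ + _| ≤ |f ((k : ℤ) * m + m) - f ((k : ℤ) * m) - f m| + |f ((k : ℤ) * m) - (k : ℤ) * f m| := abs_add_le _ _
    _ ≤ C + (C * k + |f 0|) := add_le_add h1 h2
    _ = C * (k + 1) + |f 0| := by ring

/-- If `f` is an almost homomorphism then `|f (n*m) - n * f m| ≤ C * |n|` for a
suitable constant `C` and all integers `n ≠ 0`, `m`. -/
theorem almostHom_linear_growth (f : ℤ → ℤ)
    (hf : ∃ C : ℤ, ∀ p q : ℤ, |f (p + q) - f p - f q| ≤ C) :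
    ∃ C : ℤ, ∀ n m : ℤ, n ≠ 0 → |f (n * m) - n * f m| ≤ C * |n| := by
  obtain ⟨C, h⟩ := hf
  have hC : 0 ≤ C := le_trans (abs_nonneg _) (h 0 0)
  refine ⟨2 * C + 2 * |f 0|, ?_⟩
  intro n m hn
  have key := almostHom_nat_growth f C h
  rcases le_or_gt 0 n with hpos | hneg
  · have hk := key n.toNat m
    rw [Int.toNat_of_nonneg hpos] at hk
    have hab : |n| = n := abs_of_nonneg hpos
    rw [hab]
    calc |f (n * m) - n * f m| ≤ C * n + |f 0| := hk
    _ ≤ (2 * C + 2 * |f 0|) * n := by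
        have hn1 : (1:ℤ) ≤ n := lt_of_le_of_ne hpos (Ne.symm hn)
        nlinarith [abs_nonneg (f 0)]
  · -- n < 0
    have hk := key (-n).toNat m
    rw [Int.toNat_of_nonneg (by omega : (0:ℤ) ≤ -n)] at hk
    have h0 := h (n * m) (-n * m)
    have e1 : n * m + -n * m = 0 := by ring
    rw [e1] at h0
    have hab : |n| = -n := abs_of_neg hneg
    rw [hab]
    have habs : |f (n * m) - n * f m| ≤ |f 0 - f (n*m) - f (-n*m)| + |f (-n * m) - (-n) * f m| + |f 0| := by
      have : f (n * m) - n * f m = -((f 0 - f (n*m) - f (-n*m)) + (f (-n * m) - (-n) * f m)) + f 0 := by ring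
      rw [this]
      calc |_ + f 0| ≤ |-((f 0 - f (n*m) - f (-n*m)) + (f (-n * m) - (-n) * f m))| + |f 0| := abs_add_le _ _
      _ ≤ _ := by rw [abs_neg]; exact add_le_add (abs_add_le _ _) le_rfl
    have hn1 : (1:ℤ) ≤ -n := by omega
    calc |f (n * m) - n * f m| ≤ |f 0 - f (n*m) - f (-n*m)| + |f (-n * m) - (-n) * f m| + |f 0| := habs
    _ ≤ C + (C * (-n) + |f 0|) + |f 0| := by
        have hb1 : |f 0 - f (n*m) - f (-n*m)| ≤ C := by
          calc |f 0 - f (n*m) - f (-n*m)| = |f (n*m + -n*m) - f (n*m) - f (-n*m)| := by rw [e1]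
          _ ≤ C := h _ _
        exact add_le_add (add_le_add hb1 hk) le_rfl
    _ ≤ (2 * C + 2 * |f 0|) * (-n) := by nlinarith [abs_nonneg (f 0)]
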